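/- Under the hypotheses of the i-SpaSP hidden-residual lemma (W satisfies RIP with δ_{4s} ≤ 0.1, H = Z + E with Z s-row-sparse and H entrywise nonnegative), the output residual V_t = W·H − W_{:,S_t}·H_{S_t,:} after t iterations satisfies ‖V_t‖_F ≤ ‖W‖_F · ((0.444)^t ‖μ(H)‖₂ + (14 + 7/√s)‖μ(E)‖₁). -/

import Mathlib

open Finset Matrix

noncomputable def mu {m n : ℕ} (X : Matrix (Fin m) (Fin n) ℝ) : Fin m → ℝ :=
  fun i => ∑ j, X i j

noncomputable def l1 {n : ℕ} (v : Fin n → ℝ) : ℝ := ∑ i, |v i|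

noncomputable def l2 {n : ℕ} (v : Fin n → ℝ) : ℝ := Real.sqrt (∑ i, (v i) ^ 2)

noncomputable def frob {m n : ℕ} (X : Matrix (Fin m) (Fin n) ℝ) : ℝ :=
  Real.sqrt (∑ i, ∑ j, (X i j) ^ 2)

def vrestrict {n : ℕ} (v : Fin n → ℝ) (S : Finset (Fin n)) : Fin n → ℝ :=
  fun i => if i ∈ S then v i else 0

def rowSel {m n : ℕ} (X : Matrix (Fin m) (Fin n) ℝ) (S : Finset (Fin m)) :
    Matrix (Fin m) (Fin n) ℝ := Matrix.of fun i j => if i ∈ S then X i j else 0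

def RIP {m n : ℕ} (W : Matrix (Fin m) (Fin n) ℝ) (r : ℕ) (δ : ℝ) : Prop :=
  ∀ x : Fin n → ℝ, (Finset.univ.filter (fun i => x i ≠ 0)).card ≤ r →
    (1 - δ) * (∑ i, (x i) ^ 2) ≤ ∑ i, (W.mulVec x i) ^ 2 ∧
    ∑ i, (W.mulVec x i) ^ 2 ≤ (1 + δ) * ∑ i, (x i) ^ 2

def isTopK {n : ℕ} (k : ℕ) (v : Fin n → ℝ) (S : Finset (Fin n)) : Prop :=
  S.card = k ∧ ∀ i ∈ S, ∀ j ∉ S, |v j| ≤ |v i|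

/-- One iteration of i-SpaSP: given the current active set `S`, compute the
residual `V = W·H − W·H_{S,:}`, the importance vector `y = μ(Wᵀ·V)`, take `Ω`
the support of the `2s` largest entries of `y`, merge `Ω* = Ω ∪ S`, restrict
`b = μ(H)|_{Ω*}` and take `S'` the support of the `s` largest entries of `b`. -/
def spaspStep {m n B : ℕ} (W : Matrix (Fin m) (Fin n) ℝ)
    (H : Matrix (Fin n) (Fin B) ℝ) (s : ℕ) (S S' : Finset (Fin n)) : Prop :=
  ∃ Ω : Finset (Fin n),
    isTopK (2 * s) (mu (Wᵀ * (W * H - W * rowSel H S))) Ω ∧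
    S' ⊆ Ω ∪ S ∧
    isTopK s (vrestrict (mu H) (Ω ∪ S)) S'

section basics
variable {n : ℕ} (v u w : Fin n → ℝ) (A B : Finset (Fin n))

lemma sumsq_nonneg : (0:ℝ) ≤ ∑ i, (v i)^2 := Finset.sum_nonneg fun i _ => sq_nonneg _

lemma l2_nonneg : 0 ≤ l2 v := Real.sqrt_nonneg _
lemma l1_nonneg : 0 ≤ l1 v := Finset.sum_nonneg fun i _ => abs_nonneg _
lemma frob_nonneg {m : ℕ} (X : Matrix (Fin m) (Fin n) ℝ) : 0 ≤ frob X := Real.sqrt_nonneg _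

lemma l2_sq : l2 v ^ 2 = ∑ i, (v i)^2 := Real.sq_sqrt (sumsq_nonneg v)

lemma l2_le_of_sq_le_sq (h : ∑ i, (u i)^2 ≤ ∑ i, (v i)^2) : l2 u ≤ l2 v :=
  Real.sqrt_le_sqrt h

lemma l2_eq_norm : l2 v = ‖(WithLp.equiv 2 (Fin n → ℝ)).symm v‖ := by
  rw [EuclideanSpace.norm_eq]
  simp [l2, sq_abs]

lemma l2_add_le : l2 (u + v) ≤ l2 u + l2 v := by
  rw [l2_eq_norm, l2_eq_norm, l2_eq_norm]
  rw [show (WithLp.equiv 2 (Fin n → ℝ)).symm (u+v) = (WithLp.equiv 2 (Fin n → ℝ)).symm u + (WithLp.equiv 2 (Fin n → ℝ)).symm v from rfl]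
  exact norm_add_le _ _

lemma l2_le_l1 : l2 v ≤ l1 v := by
  rw [show l1 v = Real.sqrt ((∑ i, |v i|)^2) from (Real.sqrt_sq (l1_nonneg v)).symm]
  apply Real.sqrt_le_sqrt
  calc ∑ i, (v i)^2 = ∑ i, |v i|^2 := by simp [sq_abs]
    _ ≤ (∑ i, |v i|)^2 := sum_sq_le_sq_sum_of_nonneg (fun i _ => abs_nonneg _)

lemma sumsq_vrestrict : ∑ i, (vrestrict v A i)^2 = ∑ i ∈ A, (v i)^2 := by
  simp only [vrestrict]
  calc ∑ i, (if i ∈ A then v i else 0)^2 = ∑ i, (if i ∈ A then (v i)^2 else 0) :=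
        Finset.sum_congr rfl (fun i _ => by split <;> simp)
    _ = ∑ i ∈ A, (v i)^2 := by rw [Finset.sum_ite_mem, Finset.univ_inter]

lemma cauchy (f g : Fin n → ℝ) : ∑ i, f i * g i ≤ l2 f * l2 g := by
  have h := sum_mul_sq_le_sq_mul_sq Finset.univ f g
  calc ∑ i, f i * g i ≤ |∑ i, f i * g i| := le_abs_self _
    _ = Real.sqrt ((∑ i, f i * g i)^2) := (Real.sqrt_sq_eq_abs _).symm
    _ ≤ Real.sqrt ((∑ i, f i ^2) * (∑ i, g i ^2)) := Real.sqrt_le_sqrt h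
    _ = l2 f * l2 g := Real.sqrt_mul (sumsq_nonneg f) _

end basics

section basics2
variable {n : ℕ} (v u w : Fin n → ℝ) (A B : Finset (Fin n))

lemma l2_vrestrict_mono (h : A ⊆ B) : l2 (vrestrict v A) ≤ l2 (vrestrict v B) := by
  apply l2_le_of_sq_le_sq
  rw [sumsq_vrestrict, sumsq_vrestrict]
  exact Finset.sum_le_sum_of_subset_of_nonneg h (fun i _ _ => sq_nonneg _)

lemma l2_vrestrict_le : l2 (vrestrict v A) ≤ l2 v := by
  apply l2_le_of_sq_le_sq
  rw [sumsq_vrestrict]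
  exact Finset.sum_le_sum_of_subset_of_nonneg (Finset.subset_univ A) (fun i _ _ => sq_nonneg _)

lemma l1_vrestrict_le : l1 (vrestrict v A) ≤ l1 v := by
  apply Finset.sum_le_sum
  intro i _
  simp only [vrestrict]
  split <;> simp [abs_nonneg]

lemma vrestrict_add : vrestrict (u + v) A = vrestrict u A + vrestrict v A := by
  funext i; simp only [vrestrict, Pi.add_apply]; split <;> simp

lemma vrestrict_congr (h : ∀ i ∈ A, u i = v i) : vrestrict u A = vrestrict v A := by
  funext i; simp only [vrestrict]; split
  · exact h _ (by assumption)
  · rfl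

/-- domination: if every entry of `v` on `P` dominates (in abs) every entry on `Q`
and `Q.card ≤ P.card`, then the energy on `Q` is at most the energy on `P`. -/
lemma sum_sq_le_of_dominated (Q P : Finset (Fin n)) (hcard : Q.card ≤ P.card)
    (hdom : ∀ i ∈ P, ∀ j ∈ Q, |v j| ≤ |v i|) :
    ∑ j ∈ Q, (v j)^2 ≤ ∑ i ∈ P, (v i)^2 := by
  have : Fintype.card Q ≤ Fintype.card P := by simpa [Fintype.card_coe] using hcard
  obtain ⟨f⟩ := Function.Embedding.nonempty_of_card_le this
  calc ∑ j ∈ Q, (v j)^2 = ∑ j ∈ Q.attach, (v j.1)^2 := (Finset.sum_attach Q (fun x => (v x)^2)).symm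
    _ ≤ ∑ j ∈ Q.attach, (v (f j).1)^2 := by
        apply Finset.sum_le_sum
        intro j _
        rw [← sq_abs (v j.1), ← sq_abs (v (f j).1)]
        exact pow_le_pow_left₀ (abs_nonneg _) (hdom _ (f j).2 _ j.2) 2
    _ = ∑ i ∈ Q.attach.image f, (v i.1)^2 := by
        rw [Finset.sum_image (fun a _ b _ h => f.injective h)]
    _ ≤ ∑ i ∈ P.attach, (v i.1)^2 := by
        apply Finset.sum_le_sum_of_subset_of_nonneg (Finset.subset_univ _ |>.trans (by rw [Finset.univ_eq_attach]))
        intro i _ _; exact sq_nonneg _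
    _ = ∑ i ∈ P, (v i)^2 := Finset.sum_attach P (fun x => (v x)^2)

end basics2

/-- support of a vector as a finset -/
noncomputable def suppF {n : ℕ} (v : Fin n → ℝ) : Finset (Fin n) :=
  Finset.univ.filter (fun i => v i ≠ 0)

section supp
variable {n : ℕ} (u v : Fin n → ℝ) (A : Finset (Fin n))

lemma mem_suppF {v : Fin n → ℝ} {i : Fin n} : i ∈ suppF v ↔ v i ≠ 0 := by
  simp [suppF]

lemma suppF_vrestrict : suppF (vrestrict v A) ⊆ A := by
  intro i hi
  rw [mem_suppF] at hi
  by_contra h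
  exact hi (by simp [vrestrict, h])

lemma suppF_add : suppF (u + v) ⊆ suppF u ∪ suppF v := by
  intro i hi
  rw [mem_suppF] at hi
  rw [Finset.mem_union, mem_suppF, mem_suppF]
  by_contra h
  push_neg at h
  exact hi (by simp [Pi.add_apply, h.1, h.2])

lemma suppF_sub : suppF (u - v) ⊆ suppF u ∪ suppF v := by
  intro i hi
  rw [mem_suppF] at hi
  rw [Finset.mem_union, mem_suppF, mem_suppF]
  by_contra h
  push_neg at h
  exact hi (by simp [Pi.sub_apply, h.1, h.2])

lemma eq_zero_of_sumsq (h : ∑ i, (v i)^2 = 0) : v = 0 := by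
  funext i
  have := (Finset.sum_eq_zero_iff_of_nonneg (fun i _ => sq_nonneg (v i))).1 h i (Finset.mem_univ i)
  exact pow_eq_zero_iff (by norm_num) |>.1 this

end supp

section rip
variable {m n s : ℕ} {W : Matrix (Fin m) (Fin n) ℝ} {δ : ℝ}
  (hrip : RIP W (4*s) δ) (hδ : δ ≤ 0.1) (hδ0 : 0 ≤ δ) (hs1 : 1 ≤ s)

lemma dotp_mulVec (u : Fin n → ℝ) (w : Fin m → ℝ) :
    ∑ i, W.mulVec u i * w i = ∑ k, u k * Wᵀ.mulVec w k := by
  simp only [Matrix.mulVec, dotProduct, Matrix.transpose_apply, Finset.sum_mul,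
    Finset.mul_sum]
  rw [Finset.sum_comm]
  apply Finset.sum_congr rfl; intro k _
  apply Finset.sum_congr rfl; intro i _
  ring

include hrip hδ in
lemma rip_upper (v : Fin n → ℝ) (h : (suppF v).card ≤ 4*s) :
    ∑ i, (W.mulVec v i)^2 ≤ 1.1 * ∑ i, (v i)^2 := by
  have := (hrip v h).2
  nlinarith [sumsq_nonneg v]

include hrip hδ in
lemma rip_upper_l2 (v : Fin n → ℝ) (h : (suppF v).card ≤ 4*s) :
    l2 (W.mulVec v) ≤ Real.sqrt 1.1 * l2 v := by
  rw [l2, l2, ← Real.sqrt_mul (by norm_num : (1.1:ℝ) ≥ 0)]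
  exact Real.sqrt_le_sqrt (rip_upper hrip hδ v h)

include hrip in
/-- the bilinear RIP bound, unscaled version -/
lemma rip_bilinear_raw (u v : Fin n → ℝ)
    (h : (suppF u ∪ suppF v).card ≤ 4*s) :
    ∑ i, W.mulVec u i * W.mulVec v i - ∑ i, u i * v i
      ≤ δ * ((∑ i, (u i)^2) + (∑ i, (v i)^2)) / 2 := by
  have hsub1 : (suppF (u + v)).card ≤ 4*s :=
    le_trans (Finset.card_le_card (suppF_add u v)) h
  have hsub2 : (suppF (u - v)).card ≤ 4*s :=
    le_trans (Finset.card_le_card (suppF_sub u v)) h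
  have h1 := (hrip (u + v) hsub1).2
  have h2 := (hrip (u - v) hsub2).1
  have e1 : ∀ i, W.mulVec (u + v) i = W.mulVec u i + W.mulVec v i := by
    intro i; rw [Matrix.mulVec_add]; rfl
  have e2 : ∀ i, W.mulVec (u - v) i = W.mulVec u i - W.mulVec v i := by
    intro i; rw [Matrix.mulVec_sub]; rfl
  have s1 : ∑ i, (W.mulVec (u+v) i)^2
      = ∑ i, (W.mulVec u i)^2 + ∑ i, (W.mulVec v i)^2 + 2 * ∑ i, W.mulVec u i * W.mulVec v i := by
    simp only [e1]
    rw [← Finset.sum_add_distrib, Finset.mul_sum, ← Finset.sum_add_distrib]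
    apply Finset.sum_congr rfl; intro i _; ring
  have s2 : ∑ i, (W.mulVec (u-v) i)^2
      = ∑ i, (W.mulVec u i)^2 + ∑ i, (W.mulVec v i)^2 - 2 * ∑ i, W.mulVec u i * W.mulVec v i := by
    simp only [e2]
    rw [Finset.mul_sum]
    rw [show ∑ i, (W.mulVec u i - W.mulVec v i)^2
      = ∑ i, ((W.mulVec u i)^2 + (W.mulVec v i)^2 - 2*(W.mulVec u i * W.mulVec v i)) from
      Finset.sum_congr rfl (fun i _ => by ring)]
    rw [Finset.sum_sub_distrib, Finset.sum_add_distrib]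
  have s3 : ∑ i, (u i + v i)^2 = ∑ i, (u i)^2 + ∑ i, (v i)^2 + 2 * ∑ i, u i * v i := by
    rw [← Finset.sum_add_distrib, Finset.mul_sum, ← Finset.sum_add_distrib]
    apply Finset.sum_congr rfl; intro i _; ring
  have s4 : ∑ i, (u i - v i)^2 = ∑ i, (u i)^2 + ∑ i, (v i)^2 - 2 * ∑ i, u i * v i := by
    rw [Finset.mul_sum]
    rw [show ∑ i, (u i - v i)^2
      = ∑ i, ((u i)^2 + (v i)^2 - 2*(u i * v i)) from
      Finset.sum_congr rfl (fun i _ => by ring)]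
    rw [Finset.sum_sub_distrib, Finset.sum_add_distrib]
  have A1 : ∑ i, (W.mulVec u i)^2 + ∑ i, (W.mulVec v i)^2 + 2 * ∑ i, W.mulVec u i * W.mulVec v i
      ≤ (1+δ) * (∑ i, (u i)^2 + ∑ i, (v i)^2 + 2 * ∑ i, u i * v i) := by
    rw [← s1, ← s3]
    simpa [Pi.add_apply] using h1
  have A2 : (1-δ) * (∑ i, (u i)^2 + ∑ i, (v i)^2 - 2 * ∑ i, u i * v i)
      ≤ ∑ i, (W.mulVec u i)^2 + ∑ i, (W.mulVec v i)^2 - 2 * ∑ i, W.mulVec u i * W.mulVec v i := by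
    rw [← s2, ← s4]
    simpa [Pi.sub_apply] using h2
  linarith

include hrip hδ0 in
lemma rip_bilinear (u v : Fin n → ℝ) (h : (suppF u ∪ suppF v).card ≤ 4*s) :
    ∑ i, W.mulVec u i * W.mulVec v i - ∑ i, u i * v i ≤ δ * (l2 u * l2 v) := by
  by_cases hu : ∑ i, (u i)^2 = 0
  · have hu0 : u = 0 := eq_zero_of_sumsq u hu
    rw [hu0]
    simp [Matrix.mulVec_zero, l2]
  by_cases hv : ∑ i, (v i)^2 = 0
  · have hv0 : v = 0 := eq_zero_of_sumsq v hv
    rw [hv0]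
    simp [Matrix.mulVec_zero, l2]
  have ha : 0 < l2 u := by
    rw [l2]; exact Real.sqrt_pos.2 (lt_of_le_of_ne (sumsq_nonneg u) (Ne.symm hu))
  have hb : 0 < l2 v := by
    rw [l2]; exact Real.sqrt_pos.2 (lt_of_le_of_ne (sumsq_nonneg v) (Ne.symm hv))
  set a := l2 u with hadef
  set b := l2 v with hbdef
  set c := Real.sqrt (b / a) with hcdef
  have hc : 0 < c := Real.sqrt_pos.2 (div_pos hb ha)
  have hc2 : c^2 = b / a := Real.sq_sqrt (le_of_lt (div_pos hb ha))
  set u' := fun i => c * u i with hu'def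
  set v' := fun i => c⁻¹ * v i with hv'def
  have hsu : suppF u' ⊆ suppF u := by
    intro i hi; rw [mem_suppF] at hi ⊢
    intro hz; exact hi (by simp [hu'def, hz])
  have hsv : suppF v' ⊆ suppF v := by
    intro i hi; rw [mem_suppF] at hi ⊢
    intro hz; exact hi (by simp [hv'def, hz])
  have hcard : (suppF u' ∪ suppF v').card ≤ 4*s :=
    le_trans (Finset.card_le_card (Finset.union_subset_union hsu hsv)) h
  have raw := rip_bilinear_raw hrip u' v' hcard
  have mvu : ∀ i, W.mulVec u' i = c * W.mulVec u i := by
    intro i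
    simp only [Matrix.mulVec, dotProduct, hu'def, Finset.mul_sum]
    apply Finset.sum_congr rfl; intro k _; ring
  have mvv : ∀ i, W.mulVec v' i = c⁻¹ * W.mulVec v i := by
    intro i
    simp only [Matrix.mulVec, dotProduct, hv'def, Finset.mul_sum]
    apply Finset.sum_congr rfl; intro k _; ring
  have e1 : ∑ i, W.mulVec u' i * W.mulVec v' i = ∑ i, W.mulVec u i * W.mulVec v i := by
    apply Finset.sum_congr rfl; intro i _
    rw [mvu, mvv]
    field_simp
  have e2 : ∑ i, u' i * v' i = ∑ i, u i * v i := by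
    apply Finset.sum_congr rfl; intro i _
    simp only [hu'def, hv'def]
    field_simp
  have e3 : ∑ i, (u' i)^2 = (b/a) * ∑ i, (u i)^2 := by
    rw [Finset.mul_sum]
    apply Finset.sum_congr rfl; intro i _
    simp only [hu'def]
    rw [mul_pow, hc2]
  have e4 : ∑ i, (v' i)^2 = (a/b) * ∑ i, (v i)^2 := by
    rw [Finset.mul_sum]
    apply Finset.sum_congr rfl; intro i _
    simp only [hv'def]
    rw [mul_pow, inv_pow, hc2]
    rw [show ((b/a)⁻¹ : ℝ) = a/b by rw [inv_div]]
  have hA : ∑ i, (u i)^2 = a^2 := (l2_sq u).symm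
  have hB : ∑ i, (v i)^2 = b^2 := (l2_sq v).symm
  rw [e1, e2, e3, e4, hA, hB] at raw
  have : (b/a) * a^2 = a * b := by field_simp
  have h2 : (a/b) * b^2 = a * b := by field_simp
  rw [this, h2] at raw
  calc ∑ i, W.mulVec u i * W.mulVec v i - ∑ i, u i * v i ≤ δ * (a*b + a*b)/2 := raw
    _ = δ * (a * b) := by ring

include hrip hδ hδ0 in
lemma rip_offdiag (v : Fin n → ℝ) (Λ : Finset (Fin n))
    (h : (Λ ∪ suppF v).card ≤ 4*s) :
    l2 (vrestrict (Wᵀ.mulVec (W.mulVec v) - v) Λ) ≤ δ * l2 v := by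
  set w := vrestrict (Wᵀ.mulVec (W.mulVec v) - v) Λ with hwdef
  have key : ∑ i, (w i)^2 = ∑ i, w i * (Wᵀ.mulVec (W.mulVec v) - v) i := by
    apply Finset.sum_congr rfl; intro i _
    by_cases hi : i ∈ Λ
    · rw [show w i = (Wᵀ.mulVec (W.mulVec v) - v) i from by simp [hwdef, vrestrict, hi]]
      ring
    · rw [show w i = 0 from by simp [hwdef, vrestrict, hi]]
      ring
  have key2 : ∑ i, w i * (Wᵀ.mulVec (W.mulVec v) - v) i
      = ∑ i, W.mulVec w i * W.mulVec v i - ∑ i, w i * v i := by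
    rw [show ∑ i, w i * (Wᵀ.mulVec (W.mulVec v) - v) i
        = ∑ i, w i * Wᵀ.mulVec (W.mulVec v) i - ∑ i, w i * v i from by
      rw [← Finset.sum_sub_distrib]
      exact Finset.sum_congr rfl fun i _ => by simp [Pi.sub_apply]; ring]
    rw [← dotp_mulVec w (W.mulVec v)]
  have hsupp : (suppF w ∪ suppF v).card ≤ 4*s := by
    refine le_trans (Finset.card_le_card ?_) h
    exact Finset.union_subset_union (suppF_vrestrict _ _) (le_refl _)
  have hb := rip_bilinear hrip hδ0 w v hsupp
  have hsq : l2 w ^ 2 ≤ δ * (l2 w * l2 v) := by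
    rw [l2_sq, key, key2]; linarith
  by_cases hw : l2 w = 0
  · rw [hw]
    exact mul_nonneg hδ0 (l2_nonneg v)
  · have hwpos : 0 < l2 w := lt_of_le_of_ne (l2_nonneg w) (Ne.symm hw)
    nlinarith [hsq]

include hrip hδ in
lemma rip_adjoint (u : Fin m → ℝ) (Λ : Finset (Fin n)) (h : Λ.card ≤ 4*s) :
    l2 (vrestrict (Wᵀ.mulVec u) Λ) ≤ Real.sqrt 1.1 * l2 u := by
  set w := vrestrict (Wᵀ.mulVec u) Λ with hwdef
  have key : ∑ i, (w i)^2 = ∑ i, w i * Wᵀ.mulVec u i := by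
    apply Finset.sum_congr rfl; intro i _
    by_cases hi : i ∈ Λ
    · rw [show w i = Wᵀ.mulVec u i from by simp [hwdef, vrestrict, hi]]
      ring
    · rw [show w i = 0 from by simp [hwdef, vrestrict, hi]]
      ring
  have hcard : (suppF w).card ≤ 4*s :=
    le_trans (Finset.card_le_card (suppF_vrestrict _ _)) h
  have hcs : ∑ i, W.mulVec w i * u i ≤ l2 (W.mulVec w) * l2 u := cauchy _ _
  have hup := rip_upper_l2 hrip hδ w hcard
  have hsq : l2 w ^2 ≤ Real.sqrt 1.1 * l2 w * l2 u := by
    rw [l2_sq, key, dotp_mulVec w u |>.symm]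
    calc ∑ i, W.mulVec w i * u i ≤ l2 (W.mulVec w) * l2 u := hcs
      _ ≤ Real.sqrt 1.1 * l2 w * l2 u :=
          mul_le_mul_of_nonneg_right hup (l2_nonneg u)
  by_cases hw : l2 w = 0
  · rw [hw]
    exact mul_nonneg (Real.sqrt_nonneg _) (l2_nonneg u)
  · have hwpos : 0 < l2 w := lt_of_le_of_ne (l2_nonneg w) (Ne.symm hw)
    nlinarith [hsq]

lemma l2_sum_le {k : ℕ} (g : Fin k → (Fin n → ℝ)) :
    l2 (∑ j, g j) ≤ ∑ j, l2 (g j) := by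
  classical
  induction (Finset.univ : Finset (Fin k)) using Finset.induction with
  | empty => simp [l2]
  | insert _ _ hx ih =>
      rw [Finset.sum_insert hx, Finset.sum_insert hx]
      exact le_trans (l2_add_le _ _) (by linarith [ih])

include hrip hδ hs1 in
lemma rip_noise (e : Fin n → ℝ) : l2 (W.mulVec e) ≤ Real.sqrt 1.1 * l1 e := by
  have hs : W.mulVec e = ∑ k, (fun i => e k * W i k) := by
    funext i
    rw [Finset.sum_apply]
    simp [Matrix.mulVec, dotProduct, mul_comm]
  have hcol : ∀ k, l2 (fun i => e k * W i k) = |e k| * l2 (fun i => W i k) := by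
    intro k
    rw [l2, l2, show ∑ i, (e k * W i k)^2 = (e k)^2 * ∑ i, (W i k)^2 from by
      rw [Finset.mul_sum]; exact Finset.sum_congr rfl fun i _ => by ring]
    rw [Real.sqrt_mul (sq_nonneg _), Real.sqrt_sq_eq_abs]
  have hbasis : ∀ k : Fin n, l2 (fun i => W i k) ≤ Real.sqrt 1.1 := by
    intro k
    have hb : (fun i => W i k) = W.mulVec (fun j => if j = k then 1 else 0) := by
      funext i
      simp [Matrix.mulVec, dotProduct]
    have hsupp : (suppF (fun j : Fin n => if j = k then (1:ℝ) else 0)).card ≤ 4*s := by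
      refine le_trans (Finset.card_le_card (show suppF _ ⊆ {k} from ?_)) ?_
      · intro i hi
        rw [mem_suppF] at hi
        simp only [Finset.mem_singleton]
        by_contra hik
        simp [hik] at hi
      · simp only [Finset.card_singleton]
        omega
    have := rip_upper_l2 hrip hδ (fun j => if j = k then (1:ℝ) else 0) hsupp
    rw [← hb] at this
    refine le_trans this ?_
    rw [show l2 (fun j : Fin n => if j = k then (1:ℝ) else 0) = 1 from ?_]
    · linarith
    · rw [l2, show ∑ j, (if j = k then (1:ℝ) else 0)^2 = 1 from by simp, Real.sqrt_one]
  calc l2 (W.mulVec e) = l2 (∑ k, (fun i => e k * W i k)) := by rw [hs]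
    _ ≤ ∑ k, l2 (fun i => e k * W i k) := l2_sum_le _
    _ = ∑ k, |e k| * l2 (fun i => W i k) := Finset.sum_congr rfl fun k _ => hcol k
    _ ≤ ∑ k, |e k| * Real.sqrt 1.1 :=
        Finset.sum_le_sum fun k _ => mul_le_mul_of_nonneg_left (hbasis k) (abs_nonneg _)
    _ = Real.sqrt 1.1 * l1 e := by
        rw [l1, Finset.mul_sum]
        exact Finset.sum_congr rfl fun k _ => by ring

include hrip hδ hs1 in
lemma rip_noise_proj (e : Fin n → ℝ) (Λ : Finset (Fin n)) (h : Λ.card ≤ 4*s) :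
    l2 (vrestrict (Wᵀ.mulVec (W.mulVec e)) Λ) ≤ 1.1 * l1 e := by
  calc l2 (vrestrict (Wᵀ.mulVec (W.mulVec e)) Λ)
      ≤ Real.sqrt 1.1 * l2 (W.mulVec e) := rip_adjoint hrip hδ _ Λ h
    _ ≤ Real.sqrt 1.1 * (Real.sqrt 1.1 * l1 e) :=
        mul_le_mul_of_nonneg_left (rip_noise hrip hδ hs1 e) (Real.sqrt_nonneg _)
    _ = 1.1 * l1 e := by
        rw [← mul_assoc, Real.mul_self_sqrt (by norm_num : (0:ℝ) ≤ 1.1)]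

end rip

section step

lemma l2_sub_le {n : ℕ} (u v : Fin n → ℝ) : l2 (u - v) ≤ l2 u + l2 v := by
  have : u - v = u + (-v) := by funext i; simp [sub_eq_add_neg]
  rw [this]
  refine le_trans (l2_add_le (-v) u) ?_
  have : l2 (-v) = l2 v := by
    simp only [l2]
    congr 1
    exact Finset.sum_congr rfl fun i _ => by simp
  rw [this]

lemma rip_delta_nonneg {m n s : ℕ} {W : Matrix (Fin m) (Fin n) ℝ} {δ : ℝ}
    (hrip : RIP W (4*s) δ) (hs1 : 1 ≤ s) (hn : 0 < n) : 0 ≤ δ := by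
  set x : Fin n → ℝ := fun j => if j = ⟨0, hn⟩ then 1 else 0 with hxdef
  have hsupp : (Finset.univ.filter (fun i => x i ≠ 0)).card ≤ 4*s := by
    refine le_trans (Finset.card_le_card (show _ ⊆ ({⟨0, hn⟩} : Finset (Fin n)) from ?_)) ?_
    · intro i hi
      simp only [Finset.mem_filter, hxdef] at hi
      simp only [Finset.mem_singleton]
      by_contra hik
      simp [hik] at hi
    · simp only [Finset.card_singleton]; omega
  have h := hrip x hsupp
  have hx1 : ∑ j, (x j)^2 = 1 := by simp [hxdef]
  rw [hx1] at h
  obtain ⟨h1, h2⟩ := h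
  linarith

set_option maxHeartbeats 1000000 in
lemma step_bound {m n s : ℕ} (hs1 : 1 ≤ s) {W : Matrix (Fin m) (Fin n) ℝ} {δ : ℝ}
    (hrip : RIP W (4*s) δ) (hδ : δ ≤ 0.1) (hδ0 : 0 ≤ δ)
    (z e x : Fin n → ℝ) (hx : x = z + e)
    (T : Finset (Fin n)) (hT : T.card ≤ s) (hzT : ∀ i, i ∉ T → z i = 0)
    (S S' Ω : Finset (Fin n)) (hScard : S.card ≤ s)
    (hΩ : isTopK (2*s) (Wᵀ.mulVec (W.mulVec (vrestrict x Sᶜ))) Ω)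
    (hsub : S' ⊆ Ω ∪ S)
    (htop : isTopK s (vrestrict x (Ω ∪ S)) S') :
    l2 (vrestrict x S'ᶜ) ≤ 0.2 * l2 (vrestrict x Sᶜ) + 4.4 * l1 e := by
  classical
  set d := vrestrict x Sᶜ with hd
  set zTr := vrestrict z (T \ S) with hzTr
  set eS := vrestrict e Sᶜ with heS
  have ha : d = zTr + eS := by
    funext i
    simp only [hd, hzTr, heS, vrestrict, Pi.add_apply, Finset.mem_compl, Finset.mem_sdiff]
    by_cases hiS : i ∈ S
    · simp [hiS]
    · by_cases hiT : i ∈ T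
      · simp [hiS, hiT, hx, Pi.add_apply]
      · simp [hiS, hiT, hx, Pi.add_apply, hzT i hiT]
  set y := Wᵀ.mulVec (W.mulVec d) with hy
  set Λ1 := (T \ S) \ Ω with hΛ1
  set Λ2 := Ω \ (T \ S) with hΛ2
  have cTr : (T \ S).card ≤ s := le_trans (Finset.card_le_card (Finset.sdiff_subset)) hT
  have cΛ1 : Λ1.card ≤ s := le_trans (Finset.card_le_card (Finset.sdiff_subset)) cTr
  have cΩ : Ω.card = 2*s := hΩ.1
  have cΛ2 : Λ1.card ≤ Λ2.card := by
    have h1 : Ω.card - (T \ S).card ≤ Λ2.card := Finset.le_card_sdiff (T \ S) Ω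
    rw [cΩ] at h1
    omega
  have cΛ2le : Λ2.card ≤ 2*s := by
    rw [← cΩ]; exact Finset.card_le_card (Finset.sdiff_subset)
  -- (1) top-2s energy comparison
  have E12 : l2 (vrestrict y Λ1) ≤ l2 (vrestrict y Λ2) := by
    apply l2_le_of_sq_le_sq
    rw [sumsq_vrestrict, sumsq_vrestrict]
    apply sum_sq_le_of_dominated y Λ1 Λ2 cΛ2
    intro i hi j hj
    exact hΩ.2 i (Finset.mem_sdiff.1 hi).1 j (Finset.mem_sdiff.1 hj).2
  -- (2) y decomposition
  have hy2 : y = Wᵀ.mulVec (W.mulVec zTr) + Wᵀ.mulVec (W.mulVec eS) := by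
    rw [hy, ha, Matrix.mulVec_add, Matrix.mulVec_add]
  -- (3) bound on Λ2
  have supzTr : suppF zTr ⊆ T \ S := suppF_vrestrict z (T \ S)
  have bound1 : l2 (vrestrict (Wᵀ.mulVec (W.mulVec zTr)) Λ2) ≤ δ * l2 zTr := by
    have heq : vrestrict (Wᵀ.mulVec (W.mulVec zTr)) Λ2
        = vrestrict (Wᵀ.mulVec (W.mulVec zTr) - zTr) Λ2 := by
      apply vrestrict_congr
      intro i hi
      have : zTr i = 0 := by
        simp only [hzTr, vrestrict]
        rw [if_neg (Finset.mem_sdiff.1 hi).2]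
      simp [Pi.sub_apply, this]
    rw [heq]
    apply rip_offdiag hrip hδ hδ0 zTr Λ2
    calc (Λ2 ∪ suppF zTr).card ≤ Λ2.card + (suppF zTr).card := Finset.card_union_le _ _
      _ ≤ 2*s + s := add_le_add cΛ2le (le_trans (Finset.card_le_card supzTr) cTr)
      _ ≤ 4*s := by omega
  have bound2 : ∀ Λ : Finset (Fin n), Λ.card ≤ 4*s →
      l2 (vrestrict (Wᵀ.mulVec (W.mulVec eS)) Λ) ≤ 1.1 * l1 e := by
    intro Λ hΛ
    calc l2 (vrestrict (Wᵀ.mulVec (W.mulVec eS)) Λ) ≤ 1.1 * l1 eS :=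
          rip_noise_proj hrip hδ hs1 eS Λ hΛ
      _ ≤ 1.1 * l1 e := by
          have := l1_vrestrict_le e Sᶜ
          rw [← heS] at this
          linarith
  have BΛ2 : l2 (vrestrict y Λ2) ≤ δ * l2 zTr + 1.1 * l1 e := by
    rw [hy2, vrestrict_add]
    refine le_trans (l2_add_le _ _) (add_le_add bound1 (bound2 Λ2 (by omega)))
  -- (4) lower bound via Λ1
  have idΛ1 : vrestrict zTr Λ1 =
      vrestrict y Λ1 - vrestrict (Wᵀ.mulVec (W.mulVec zTr) - zTr) Λ1
        - vrestrict (Wᵀ.mulVec (W.mulVec eS)) Λ1 := by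
    funext i
    simp only [vrestrict, Pi.sub_apply]
    by_cases hi : i ∈ Λ1
    · simp only [hi, if_pos, if_true]
      rw [show y i = Wᵀ.mulVec (W.mulVec zTr) i + Wᵀ.mulVec (W.mulVec eS) i from by
        rw [hy2]; rfl]
      ring
    · simp [hi]
  have B1 : l2 (vrestrict zTr Λ1) ≤ l2 (vrestrict y Λ1) + δ * l2 zTr + 1.1 * l1 e := by
    rw [idΛ1]
    have t1 : l2 (vrestrict (Wᵀ.mulVec (W.mulVec zTr) - zTr) Λ1) ≤ δ * l2 zTr := by
      apply rip_offdiag hrip hδ hδ0 zTr Λ1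
      calc (Λ1 ∪ suppF zTr).card ≤ Λ1.card + (suppF zTr).card := Finset.card_union_le _ _
        _ ≤ s + s := add_le_add cΛ1 (le_trans (Finset.card_le_card supzTr) cTr)
        _ ≤ 4*s := by omega
    have t2 := bound2 Λ1 (by omega)
    calc l2 (vrestrict y Λ1 - vrestrict (Wᵀ.mulVec (W.mulVec zTr) - zTr) Λ1
          - vrestrict (Wᵀ.mulVec (W.mulVec eS)) Λ1)
        ≤ l2 (vrestrict y Λ1 - vrestrict (Wᵀ.mulVec (W.mulVec zTr) - zTr) Λ1)
          + l2 (vrestrict (Wᵀ.mulVec (W.mulVec eS)) Λ1) := l2_sub_le _ _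
      _ ≤ (l2 (vrestrict y Λ1) + l2 (vrestrict (Wᵀ.mulVec (W.mulVec zTr) - zTr) Λ1))
          + l2 (vrestrict (Wᵀ.mulVec (W.mulVec eS)) Λ1) :=
          add_le_add (l2_sub_le _ _) le_rfl
      _ ≤ l2 (vrestrict y Λ1) + δ * l2 zTr + 1.1 * l1 e := by linarith
  have B2 : l2 (vrestrict zTr Λ1) ≤ 0.2 * l2 zTr + 2.2 * l1 e := by
    have := le_trans B1 (by linarith [E12, BΛ2] :
      l2 (vrestrict y Λ1) + δ * l2 zTr + 1.1 * l1 e ≤ 2 * δ * l2 zTr + 2.2 * l1 e)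
    refine le_trans this ?_
    have := l2_nonneg zTr
    nlinarith
  -- (5) pruning
  set A := T ∩ (Ω ∪ S) with hA
  have hS'card : S'.card = s := htop.1
  have hAcard : A.card ≤ s := le_trans (Finset.card_le_card (Finset.inter_subset_left)) hT
  have cardsd : (A \ S').card ≤ (S' \ A).card := by
    have h1 := Finset.card_sdiff_add_card_inter A S'
    have h2 := Finset.card_sdiff_add_card_inter S' A
    rw [Finset.inter_comm S' A] at h2
    omega
  set xv := vrestrict x (Ω ∪ S) with hxv
  have hdom : ∑ j ∈ A \ S', (xv j)^2 ≤ ∑ i ∈ S' \ A, (xv i)^2 := by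
    apply sum_sq_le_of_dominated xv _ _ cardsd
    intro i hi j hj
    exact htop.2 i (Finset.mem_sdiff.1 hi).1 j (Finset.mem_sdiff.1 hj).2
  have hAle : ∑ i ∈ A, (xv i)^2 ≤ ∑ i ∈ S', (xv i)^2 := by
    have h1 : ∑ i ∈ A ∩ S', (xv i)^2 + ∑ i ∈ A \ S', (xv i)^2 = ∑ i ∈ A, (xv i)^2 :=
      Finset.sum_inter_add_sum_sdiff _ _ _
    have h2 : ∑ i ∈ S' ∩ A, (xv i)^2 + ∑ i ∈ S' \ A, (xv i)^2 = ∑ i ∈ S', (xv i)^2 :=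
      Finset.sum_inter_add_sum_sdiff _ _ _
    rw [Finset.inter_comm S' A] at h2
    linarith
  have hsub2 : A ⊆ Ω ∪ S := Finset.inter_subset_right
  have hsd1 : ∑ i ∈ (Ω ∪ S) \ S', (xv i)^2 + ∑ i ∈ S', (xv i)^2 = ∑ i ∈ Ω ∪ S, (xv i)^2 :=
    Finset.sum_sdiff hsub
  have hsd2 : ∑ i ∈ (Ω ∪ S) \ A, (xv i)^2 + ∑ i ∈ A, (xv i)^2 = ∑ i ∈ Ω ∪ S, (xv i)^2 :=
    Finset.sum_sdiff hsub2
  have step5 : ∑ i ∈ (Ω ∪ S) \ S', (xv i)^2 ≤ ∑ i ∈ (Ω ∪ S) \ A, (xv i)^2 := by linarith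
  have hseteq : (Ω ∪ S) \ A = (Ω ∪ S) \ T := by
    ext i
    simp only [Finset.mem_sdiff, hA, Finset.mem_inter]
    tauto
  have hP5 : ∑ i ∈ (Ω ∪ S) \ S', (x i)^2 ≤ (l1 e)^2 := by
    have e1 : ∑ i ∈ (Ω ∪ S) \ S', (x i)^2 = ∑ i ∈ (Ω ∪ S) \ S', (xv i)^2 := by
      apply Finset.sum_congr rfl
      intro i hi
      rw [show xv i = x i from by
        simp only [hxv, vrestrict]
        rw [if_pos (Finset.mem_sdiff.1 hi).1]]
    have e2 : ∑ i ∈ (Ω ∪ S) \ A, (xv i)^2 ≤ (l1 e)^2 := by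
      rw [hseteq]
      have e3 : ∑ i ∈ (Ω ∪ S) \ T, (xv i)^2 ≤ ∑ i, (e i)^2 := by
        calc ∑ i ∈ (Ω ∪ S) \ T, (xv i)^2 = ∑ i ∈ (Ω ∪ S) \ T, (e i)^2 := by
              apply Finset.sum_congr rfl
              intro i hi
              have hit := (Finset.mem_sdiff.1 hi).2
              have his := (Finset.mem_sdiff.1 hi).1
              rw [show xv i = x i from by
                simp only [hxv, vrestrict]; rw [if_pos his]]
              rw [hx]
              simp [Pi.add_apply, hzT i hit]
          _ ≤ ∑ i, (e i)^2 := Finset.sum_le_sum_of_subset_of_nonneg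
              (Finset.subset_univ _) (fun i _ _ => sq_nonneg _)
      refine le_trans e3 ?_
      calc ∑ i, (e i)^2 = (l2 e)^2 := (l2_sq e).symm
        _ ≤ (l1 e)^2 := by
            have h1 := l2_le_l1 e
            have h2 := l2_nonneg e
            nlinarith
    rw [e1]; exact le_trans step5 e2
  -- (6) final assembly
  have split : vrestrict x S'ᶜ = vrestrict x (Ω ∪ S)ᶜ + vrestrict x ((Ω ∪ S) \ S') := by
    funext i
    simp only [vrestrict, Pi.add_apply, Finset.mem_compl, Finset.mem_sdiff]
    by_cases hiS' : i ∈ S'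
    · have hiΩS : i ∈ Ω ∪ S := hsub hiS'
      simp [hiS', hiΩS]
    · by_cases hiΩS : i ∈ Ω ∪ S
      · simp [hiS', hiΩS]
      · simp [hiS', hiΩS]
  have term2 : l2 (vrestrict x ((Ω ∪ S) \ S')) ≤ l1 e := by
    rw [l2, sumsq_vrestrict]
    calc Real.sqrt (∑ i ∈ (Ω ∪ S) \ S', (x i)^2) ≤ Real.sqrt ((l1 e)^2) :=
          Real.sqrt_le_sqrt hP5
      _ = l1 e := Real.sqrt_sq (l1_nonneg e)
  have zcompl : vrestrict z (Ω ∪ S)ᶜ = vrestrict zTr Λ1 := by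
    funext i
    simp only [vrestrict, hzTr, hΛ1, Finset.mem_compl, Finset.mem_sdiff, Finset.mem_union]
    by_cases hiΩ : i ∈ Ω
    · simp [hiΩ]
    · by_cases hiS : i ∈ S
      · simp [hiΩ, hiS]
      · by_cases hiT : i ∈ T
        · simp [hiΩ, hiS, hiT]
        · simp [hiΩ, hiS, hiT, hzT i hiT]
  have term1 : l2 (vrestrict x (Ω ∪ S)ᶜ) ≤ 0.2 * l2 zTr + 2.2 * l1 e + l1 e := by
    have hxsplit : vrestrict x (Ω ∪ S)ᶜ = vrestrict z (Ω ∪ S)ᶜ + vrestrict e (Ω ∪ S)ᶜ := by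
      rw [hx]; exact vrestrict_add e z _
    rw [hxsplit, zcompl]
    refine le_trans (l2_add_le _ _) ?_
    have h1 : l2 (vrestrict e (Ω ∪ S)ᶜ) ≤ l1 e :=
      le_trans (l2_vrestrict_le e _) (l2_le_l1 e)
    linarith [B2]
  have dzTr : l2 zTr ≤ l2 d + l1 e := by
    have : zTr = d - eS := by rw [ha]; funext i; simp [Pi.add_apply, Pi.sub_apply]
    rw [this]
    refine le_trans (l2_sub_le d eS) ?_
    have : l2 eS ≤ l1 e := le_trans (by rw [heS]; exact l2_vrestrict_le e _) (l2_le_l1 e)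
    linarith
  calc l2 (vrestrict x S'ᶜ)
      ≤ l2 (vrestrict x (Ω ∪ S)ᶜ) + l2 (vrestrict x ((Ω ∪ S) \ S')) := by
        rw [split]; exact l2_add_le _ _
    _ ≤ (0.2 * l2 zTr + 2.2 * l1 e + l1 e) + l1 e := add_le_add term1 term2
    _ ≤ (0.2 * (l2 d + l1 e) + 2.2 * l1 e + l1 e) + l1 e := by linarith [dzTr]
    _ = 0.2 * l2 d + 4.4 * l1 e := by ring

end step

section mufrob
variable {m n B : ℕ}

lemma mu_add (X Y : Matrix (Fin m) (Fin n) ℝ) : mu (X + Y) = mu X + mu Y := by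
  funext i
  simp only [mu, Matrix.add_apply, Pi.add_apply]
  rw [Finset.sum_add_distrib]

lemma mu_sub (X Y : Matrix (Fin m) (Fin n) ℝ) : mu (X - Y) = mu X - mu Y := by
  funext i
  simp only [mu, Matrix.sub_apply, Pi.sub_apply]
  rw [Finset.sum_sub_distrib]

lemma mu_mul (A : Matrix (Fin m) (Fin n) ℝ) (M : Matrix (Fin n) (Fin B) ℝ) :
    mu (A * M) = A.mulVec (mu M) := by
  funext i
  simp only [mu, Matrix.mul_apply, Matrix.mulVec, dotProduct, Finset.mul_sum]
  rw [Finset.sum_comm]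

lemma mu_rowSel (H : Matrix (Fin m) (Fin n) ℝ) (S : Finset (Fin m)) :
    mu (rowSel H S) = vrestrict (mu H) S := by
  funext i
  simp only [mu, rowSel, vrestrict, Matrix.of_apply]
  by_cases hi : i ∈ S <;> simp [hi]

lemma self_sub_vrestrict {k : ℕ} (x : Fin k → ℝ) (S : Finset (Fin k)) :
    x - vrestrict x S = vrestrict x Sᶜ := by
  funext i
  simp only [Pi.sub_apply, vrestrict, Finset.mem_compl]
  by_cases hi : i ∈ S <;> simp [hi]

lemma l2_scale {k : ℕ} (c : ℝ) (v : Fin k → ℝ) : l2 (fun i => c * v i) = |c| * l2 v := by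
  rw [l2, l2, show ∑ i, (c * v i)^2 = c^2 * ∑ i, (v i)^2 from by
    rw [Finset.mul_sum]; exact Finset.sum_congr rfl fun i _ => by ring]
  rw [Real.sqrt_mul (sq_nonneg _), Real.sqrt_sq_eq_abs]

lemma frob_mul_le (W : Matrix (Fin m) (Fin n) ℝ) (M : Matrix (Fin n) (Fin B) ℝ)
    (hM : ∀ i j, 0 ≤ M i j) : frob (W * M) ≤ frob W * l2 (mu M) := by
  classical
  have step1 : frob (W * M) = Real.sqrt (∑ j, ∑ i, ((W * M) i j)^2) := by
    rw [frob, Finset.sum_comm]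
  have step2 : Real.sqrt (∑ j, ∑ i, ((W * M) i j)^2) ≤ ∑ j, l2 (fun i => (W * M) i j) := by
    have h1 : ∑ j, ∑ i, ((W * M) i j)^2 = ∑ j, (l2 (fun i => (W * M) i j))^2 := by
      apply Finset.sum_congr rfl; intro j _
      rw [l2_sq]
    rw [h1]
    calc Real.sqrt (∑ j, (l2 (fun i => (W * M) i j))^2)
        ≤ Real.sqrt ((∑ j, l2 (fun i => (W * M) i j))^2) :=
          Real.sqrt_le_sqrt (sum_sq_le_sq_sum_of_nonneg (fun j _ => l2_nonneg _))
      _ = ∑ j, l2 (fun i => (W * M) i j) :=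
          Real.sqrt_sq (Finset.sum_nonneg fun j _ => l2_nonneg _)
  have step3 : ∀ j, l2 (fun i => (W * M) i j) ≤ ∑ k, M k j * l2 (fun i => W i k) := by
    intro j
    have hcol : (fun i => (W * M) i j) = ∑ k, (fun i => M k j * W i k) := by
      funext i
      rw [Finset.sum_apply]
      simp [Matrix.mul_apply, mul_comm]
    rw [hcol]
    refine le_trans (l2_sum_le _) ?_
    apply Finset.sum_le_sum
    intro k _
    rw [l2_scale, abs_of_nonneg (hM k j)]
  have step4 : ∑ j, ∑ k, M k j * l2 (fun i => W i k) = ∑ k, mu M k * l2 (fun i => W i k) := by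
    rw [Finset.sum_comm]
    apply Finset.sum_congr rfl; intro k _
    rw [mu, Finset.sum_mul]
  have step5 : ∑ k, mu M k * l2 (fun i => W i k)
      ≤ l2 (mu M) * l2 (fun k => l2 (fun i => W i k)) := cauchy _ _
  have step6 : l2 (fun k => l2 (fun i => W i k)) = frob W := by
    rw [l2, frob, Finset.sum_comm]
    congr 1
    apply Finset.sum_congr rfl; intro k _
    rw [l2_sq]
  calc frob (W * M) = Real.sqrt (∑ j, ∑ i, ((W * M) i j)^2) := step1
    _ ≤ ∑ j, l2 (fun i => (W * M) i j) := step2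
    _ ≤ ∑ j, ∑ k, M k j * l2 (fun i => W i k) := Finset.sum_le_sum fun j _ => step3 j
    _ = ∑ k, mu M k * l2 (fun i => W i k) := step4
    _ ≤ l2 (mu M) * l2 (fun k => l2 (fun i => W i k)) := step5
    _ = frob W * l2 (mu M) := by rw [step6]; ring

end mufrob


set_option maxHeartbeats 1000000 in
theorem ispasp_output_residual {m n B s : ℕ} (hs : 1 ≤ s)
    (W : Matrix (Fin m) (Fin n) ℝ) (Z E H : Matrix (Fin n) (Fin B) ℝ) (δ : ℝ)
    (hδ : δ ≤ 0.1) (hrip : RIP W (4 * s) δ)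
    (hZ : (@Finset.filter _ (fun i => ∃ j, Z i j ≠ 0) (fun _ => inferInstance) Finset.univ).card ≤ s)
    (hH : H = Z + E) (hpos : ∀ i j, 0 ≤ H i j)
    (S : ℕ → Finset (Fin n)) (h0 : S 0 = ∅)
    (hstep : ∀ t, spaspStep W H s (S t) (S (t + 1))) (t : ℕ) :
    frob (W * H - W * rowSel H (S t))
      ≤ frob W *
        ((0.444 : ℝ) ^ t * l2 (mu H) + (14 + 7 / Real.sqrt s) * l1 (mu E)) := by
  classical
  -- n is positive (otherwise no 2s-element subset exists)
  have hn : 0 < n := by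
    obtain ⟨Ω0, hΩ0, -, -⟩ := hstep 0
    by_contra h
    push_neg at h
    interval_cases n
    have h1 : Ω0.card ≤ 0 := le_trans (Finset.card_le_card (Finset.subset_univ _)) (by simp)
    rw [hΩ0.1] at h1
    omega
  have hδ0 : 0 ≤ δ := rip_delta_nonneg hrip hs hn
  set x := mu H with hxdef
  set z := mu Z with hzdef
  set e := mu E with hedef
  have hxz : x = z + e := by rw [hxdef, hzdef, hedef, hH, mu_add]
  set T := @Finset.filter _ (fun i => ∃ j, Z i j ≠ 0) (fun _ => inferInstance) Finset.univ with hTdef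
  have hzT : ∀ i, i ∉ T → z i = 0 := by
    intro i hi
    simp only [hTdef, Finset.mem_filter, Finset.mem_univ, true_and, not_exists, ne_eq,
      not_not] at hi
    simp only [hzdef, mu]
    exact Finset.sum_eq_zero fun j _ => hi j
  -- the main invariant
  have key : ∀ u : ℕ, (S u).card ≤ s ∧
      l2 (vrestrict x (S u)ᶜ) ≤ (0.444:ℝ)^u * l2 x + 14 * l1 e := by
    intro u
    induction u with
    | zero =>
        refine ⟨by rw [h0]; simp, ?_⟩
        rw [h0]
        have hres : vrestrict x (∅ : Finset (Fin n))ᶜ = x := by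
          funext i; simp [vrestrict]
        rw [hres, pow_zero, one_mul]
        linarith [l1_nonneg e]
    | succ u ih =>
        obtain ⟨Ω, hΩ, hsub, htop⟩ := hstep u
        have hmu1 : mu (Wᵀ * (W * H - W * rowSel H (S u)))
            = Wᵀ.mulVec (W.mulVec (vrestrict x (S u)ᶜ)) := by
          rw [mu_mul, mu_sub, mu_mul, mu_mul, mu_rowSel, ← Matrix.mulVec_sub,
            self_sub_vrestrict]
        rw [hmu1] at hΩ
        have hb := step_bound hs hrip hδ hδ0 z e x hxz T hZ hzT (S u) (S (u+1)) Ω ih.1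
          hΩ hsub htop
        refine ⟨le_of_eq htop.1, ?_⟩
        have hP : (0:ℝ) ≤ (0.444:ℝ)^u * l2 x :=
          mul_nonneg (pow_nonneg (by norm_num) u) (l2_nonneg x)
        have hE : (0:ℝ) ≤ l1 e := l1_nonneg e
        rw [pow_succ]
        nlinarith [ih.2, hb]
  -- conclude
  have hmain := (key t).2
  have hfact : W * H - W * rowSel H (S t) = W * (H - rowSel H (S t)) := by
    rw [Matrix.mul_sub]
  have hMnn : ∀ i j, 0 ≤ (H - rowSel H (S t)) i j := by
    intro i j
    simp only [Matrix.sub_apply, rowSel, Matrix.of_apply]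
    by_cases hi : i ∈ S t <;> simp [hi, hpos i j]
  have hmu2 : mu (H - rowSel H (S t)) = vrestrict x (S t)ᶜ := by
    rw [mu_sub, mu_rowSel, ← hxdef, self_sub_vrestrict]
  calc frob (W * H - W * rowSel H (S t))
      = frob (W * (H - rowSel H (S t))) := by rw [hfact]
    _ ≤ frob W * l2 (mu (H - rowSel H (S t))) := frob_mul_le _ _ hMnn
    _ = frob W * l2 (vrestrict x (S t)ᶜ) := by rw [hmu2]
    _ ≤ frob W * ((0.444:ℝ)^t * l2 x + 14 * l1 e) :=
        mul_le_mul_of_nonneg_left hmain (frob_nonneg W)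
    _ ≤ frob W * ((0.444:ℝ)^t * l2 x + (14 + 7 / Real.sqrt s) * l1 e) := by
        apply mul_le_mul_of_nonneg_left ?_ (frob_nonneg W)
        have h7 : (0:ℝ) ≤ 7 / Real.sqrt s := div_nonneg (by norm_num) (Real.sqrt_nonneg _)
        nlinarith [l1_nonneg e]
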